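/- Define V̂ : ℝ² → ℝ by V̂(x,y) = (x² − 3xy)² + (x² − 4xy − 2y²)². Then (i) ∂V̂/∂x + ∂V̂/∂y = −6x³ + 90xy² + 32y³ at every point (x,y) ∈ ℝ², and (ii) V̂ is positive definite: V̂(0,0) = 0 and V̂(x,y) > 0 for every (x,y) ≠ (0,0). -/

import Mathlib

/-!
Statement 17: `V̂(x,y) = (x² − 3xy)² + (x² − 4xy − 2y²)²` solves the flow
equation `∂V̂/∂x + ∂V̂/∂y = −6x³ + 90xy² + 32y³` and is positive definite.
-/

theorem statement17 (V : ℝ × ℝ → ℝ)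
    (hV : ∀ p : ℝ × ℝ, V p =
      (p.1 ^ 2 - 3 * p.1 * p.2) ^ 2 + (p.1 ^ 2 - 4 * p.1 * p.2 - 2 * p.2 ^ 2) ^ 2) :
    (∀ p : ℝ × ℝ, fderiv ℝ V p (1, 0) + fderiv ℝ V p (0, 1)
      = -6 * p.1 ^ 3 + 90 * p.1 * p.2 ^ 2 + 32 * p.2 ^ 3) ∧
    V (0, 0) = 0 ∧
    (∀ p : ℝ × ℝ, p ≠ (0, 0) → 0 < V p) := by
  have hVfun : V = fun p : ℝ × ℝ =>
      (p.1 * p.1 - 3 * p.1 * p.2) * (p.1 * p.1 - 3 * p.1 * p.2) +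
      (p.1 * p.1 - 4 * p.1 * p.2 - 2 * (p.2 * p.2)) *
        (p.1 * p.1 - 4 * p.1 * p.2 - 2 * (p.2 * p.2)) := by
    funext p; rw [hV]; ring
  refine ⟨?_, ?_, ?_⟩
  · intro p
    have h1 : HasFDerivAt (fun q : ℝ × ℝ => q.1) (ContinuousLinearMap.fst ℝ ℝ ℝ) p :=
      hasFDerivAt_fst
    have h2 : HasFDerivAt (fun q : ℝ × ℝ => q.2) (ContinuousLinearMap.snd ℝ ℝ ℝ) p :=
      hasFDerivAt_snd
    have ha := (h1.mul h1).sub ((h1.const_mul 3).mul h2)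
    have hb := ((h1.mul h1).sub ((h1.const_mul 4).mul h2)).sub ((h2.mul h2).const_mul 2)
    have hu := (ha.mul ha).add (hb.mul hb)
    rw [hVfun]
    erw [hu.fderiv]
    simp [ContinuousLinearMap.smul_apply, ContinuousLinearMap.add_apply,
      ContinuousLinearMap.sub_apply, ContinuousLinearMap.comp_apply,
      ContinuousLinearMap.coe_fst', ContinuousLinearMap.coe_snd', smul_eq_mul]
    ring
  · rw [hV]; norm_num
  · intro p hp
    rw [hV]
    rcases eq_or_ne (p.1 ^ 2 - 3 * p.1 * p.2) 0 with ha | ha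
    · rcases eq_or_ne (p.1 ^ 2 - 4 * p.1 * p.2 - 2 * p.2 ^ 2) 0 with hb | hb
      · exfalso
        have hy : p.2 * (p.1 + 2 * p.2) = 0 := by nlinarith [ha, hb]
        rcases mul_eq_zero.mp hy with hy0 | hx2
        · have hx : p.1 = 0 := by nlinarith [ha]
          exact hp (Prod.ext hx hy0)
        · have hy0 : p.2 = 0 := by nlinarith [ha]
          have hx : p.1 = 0 := by nlinarith
          exact hp (Prod.ext hx hy0)
      · positivity
    · positivity
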